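/- Let κ be a singular cardinal, X ⊆ Y infinite sets, and l = (Fm_Σ(X), ⊢) a logic of cardinality κ. Then there exists a logic ⊢' on Fm_Σ(Y) of cardinality at most κ⁺ (the successor cardinal) that is a conservative extension of l: for all Γ ∪ {φ} ⊆ Fm_Σ(X) (regarded inside Fm_Σ(Y)) one has Γ ⊢ φ if and only if Γ ⊢' φ. -/

import Mathlib

universe u v w

open FirstOrder FirstOrder.Language

/-- A relation between subsets and elements of `A` is `μ`-ary. -/
def KAry {A : Type*} (μ : Cardinal) (r : Set A → A → Prop) : Prop :=
  ∀ (Γ : Set A) (φ : A), r Γ φ → ∃ Γ' ⊆ Γ, Cardinal.mk ↥Γ' < μ ∧ r Γ' φ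

/-- `r` is a logic on `Fm_Σ(W)`: reflexive, monotone, satisfying cut, structural. -/
def IsLogicOn {L : FirstOrder.Language} {W : Type*}
    (r : Set (L.Term W) → L.Term W → Prop) : Prop :=
  (∀ (Γ : Set (L.Term W)) (φ : L.Term W), φ ∈ Γ → r Γ φ) ∧
  (∀ (Γ Δ : Set (L.Term W)) (φ : L.Term W), Γ ⊆ Δ → r Γ φ → r Δ φ) ∧
  (∀ (Γ Δ : Set (L.Term W)) (φ : L.Term W), r Γ φ → (∀ ψ ∈ Γ, r Δ ψ) → r Δ φ) ∧
  (∀ (σ : W → L.Term W) (Γ : Set (L.Term W)) (φ : L.Term W),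
      r Γ φ → r ((fun t : L.Term W => t.subst σ) '' Γ) (φ.subst σ))

section Aux

variable {L : FirstOrder.Language.{u, v}} {X Y : Type w}

lemma term_subst_relabel (em : X → Y) (τ : Y → L.Term X) (t : L.Term X) :
    (t.relabel em).subst τ = t.subst (τ ∘ em) := by
  induction t with
  | var => simp [Term.subst]
  | func f ts ih => simp [Term.subst, ih]

lemma term_subst_subst (σ : Y → L.Term Y) (τ : Y → L.Term X) (t : L.Term Y) :
    (t.subst σ).subst τ = t.subst (fun y => (σ y).subst τ) := by
  induction t with
  | var => simp [Term.subst]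
  | func f ts ih => simp [Term.subst, ih]

lemma term_subst_var' (t : L.Term X) : t.subst Term.var = t := by
  induction t with
  | var => simp [Term.subst]
  | func f ts ih => simp [Term.subst, ih]

/-- The smallest logic on `Fm_Σ(Y)` containing the `em`-translation of `r`. -/
inductive Cl (em : X → Y) (r : Set (L.Term X) → L.Term X → Prop) :
    Set (L.Term Y) → L.Term Y → Prop
  | ax {Γ φ} : φ ∈ Γ → Cl em r Γ φ
  | base {Γ₀ φ₀} : r Γ₀ φ₀ → Cl em r (Term.relabel em '' Γ₀) (Term.relabel em φ₀)
  | mono {Γ Δ φ} : Γ ⊆ Δ → Cl em r Γ φ → Cl em r Δ φ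
  | cut {Γ Δ φ} : Cl em r Γ φ → (∀ ψ ∈ Γ, Cl em r Δ ψ) → Cl em r Δ φ
  | subst (σ : Y → L.Term Y) {Γ φ} : Cl em r Γ φ →
      Cl em r ((fun t : L.Term Y => t.subst σ) '' Γ) (φ.subst σ)

/-- Key invariant: any back-substitution of a `Cl`-derivable pair is `r`-derivable. -/
lemma Cl_back (em : X → Y) (r : Set (L.Term X) → L.Term X → Prop) (hlogic : IsLogicOn r)
    {Γ : Set (L.Term Y)} {φ : L.Term Y} (h : Cl em r Γ φ) (τ : Y → L.Term X) :
    r ((fun t : L.Term Y => t.subst τ) '' Γ) (φ.subst τ) := by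
  obtain ⟨hrefl, hmono, hcut, hsubst⟩ := hlogic
  induction h generalizing τ with
  | ax hφ => exact hrefl _ _ ⟨_, hφ, rfl⟩
  | @base Γ₀ φ₀ h0 =>
      have := hsubst (τ ∘ em) Γ₀ φ₀ h0
      have himg : (fun t : L.Term Y => t.subst τ) '' (Term.relabel em '' Γ₀)
          = (fun t : L.Term X => t.subst (τ ∘ em)) '' Γ₀ := by
        rw [Set.image_image]
        exact Set.image_congr fun t _ => term_subst_relabel em τ t
      rw [himg, term_subst_relabel]
      exact this
  | mono hsub _ ih => exact hmono _ _ _ (Set.image_mono hsub) (ih τ)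
  | cut _ _ ih ihs =>
      refine hcut _ _ _ (ih τ) ?_
      rintro ψ ⟨ψ₀, hψ₀, rfl⟩
      exact ihs ψ₀ hψ₀ τ
  | @subst σ Γ' φ' _ ih =>
      have := ih (fun y => (σ y).subst τ)
      have himg : (fun t : L.Term Y => t.subst τ) '' ((fun t : L.Term Y => t.subst σ) '' Γ')
          = (fun t : L.Term Y => t.subst (fun y => (σ y).subst τ)) '' Γ' := by
        rw [Set.image_image]
        exact Set.image_congr fun t _ => term_subst_subst σ τ t
      rw [himg, term_subst_subst]
      exact this

lemma Cl_kary (em : X → Y) (r : Set (L.Term X) → L.Term X → Prop)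
    (κ : Cardinal.{max u w}) (hinf : Cardinal.aleph0 ≤ κ) (hκary : KAry κ r) :
    KAry (Order.succ κ) (Cl em r) := by
  intro Γ φ h
  have hlt : ∀ {c : Cardinal.{max u w}}, c ≤ κ → c < Order.succ κ :=
    fun hc => Order.lt_succ_iff.2 hc
  induction h with
  | @ax Γ φ hφ =>
      exact ⟨{φ}, Set.singleton_subset_iff.2 hφ,
        hlt (by simpa using Cardinal.one_le_aleph0.trans hinf), Cl.ax rfl⟩
  | @base Γ₀ φ₀ h0 =>
      obtain ⟨Γ₀', hsub, hcard, h0'⟩ := hκary _ _ h0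
      refine ⟨Term.relabel em '' Γ₀', Set.image_mono hsub, ?_, Cl.base h0'⟩
      exact lt_of_le_of_lt Cardinal.mk_image_le (hcard.trans (Order.lt_succ κ))
  | @mono Γ Δ φ hsub _ ih =>
      obtain ⟨Γ', h1, h2, h3⟩ := ih
      exact ⟨Γ', h1.trans hsub, h2, h3⟩
  | @cut Γ Δ φ hΓ hΔ ih ihs =>
      obtain ⟨Γ₁, hΓ₁sub, hΓ₁card, hΓ₁⟩ := ih
      choose f hf1 hf2 hf3 using fun (ψ : L.Term Y) (hψ : ψ ∈ Γ) => ihs ψ hψ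
      set Δ' : Set (L.Term Y) := ⋃ (ψ : Γ₁), f ψ (hΓ₁sub ψ.2) with hΔ'
      refine ⟨Δ', ?_, ?_, ?_⟩
      · exact Set.iUnion_subset fun ψ => hf1 _ _
      · refine lt_of_le_of_lt (Cardinal.mk_iUnion_le _) ?_
        have h1 : Cardinal.mk ↥Γ₁ ≤ κ := Order.lt_succ_iff.1 hΓ₁card
        have h2 : ⨆ ψ : Γ₁, Cardinal.mk ↥(f ψ (hΓ₁sub ψ.2)) ≤ κ :=
          ciSup_le' fun ψ => Order.lt_succ_iff.1 (hf2 _ _)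
        calc Cardinal.mk ↥Γ₁ * ⨆ ψ : Γ₁, Cardinal.mk ↥(f ψ (hΓ₁sub ψ.2))
            ≤ κ * κ := mul_le_mul' h1 h2
          _ = κ := Cardinal.mul_eq_self hinf
          _ < Order.succ κ := Order.lt_succ κ
      · refine Cl.cut hΓ₁ fun ψ hψ => Cl.mono ?_ (hf3 ψ (hΓ₁sub hψ))
        exact Set.subset_iUnion (fun ψ : Γ₁ => f ψ (hΓ₁sub ψ.2)) ⟨ψ, hψ⟩
  | @subst σ Γ φ _ ih =>
      obtain ⟨Γ₁, h1, h2, h3⟩ := ih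
      exact ⟨_, Set.image_mono h1,
        lt_of_le_of_lt Cardinal.mk_image_le h2, Cl.subst σ h3⟩

end Aux

/-- let κ be a singular cardinal, `X ⊆ Y` infinite and
`l = (Fm_Σ(X), ⊢)` a logic of cardinality κ. Then there is a logic `r'` on `Fm_Σ(Y)`
of cardinality at most `κ⁺` (i.e. `κ⁺`-ary) which is a conservative extension of `l`. -/
theorem stmt_12 {L : FirstOrder.Language.{u, v}} {X Y : Type w}
    [Infinite X] [Infinite Y]
    (em : X → Y) (hem : Function.Injective em)
    (κ : Cardinal.{max u w}) (hinf : Cardinal.aleph0 ≤ κ) (hsing : ¬κ.IsRegular)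
    (r : Set (L.Term X) → L.Term X → Prop) (hlogic : IsLogicOn r)
    (hκary : KAry κ r)
    (hleast : ∀ μ : Cardinal.{max u w}, Cardinal.aleph0 ≤ μ → KAry μ r → κ ≤ μ) :
    ∃ r' : Set (L.Term Y) → L.Term Y → Prop,
      IsLogicOn r' ∧
      -- cardinality of r' is at most κ⁺
      KAry (Order.succ κ) r' ∧
      -- r' is a conservative extension of r
      (∀ (Γ : Set (L.Term X)) (φ : L.Term X),
          r Γ φ ↔ r' (Term.relabel em '' Γ) (Term.relabel em φ)) := by
  refine ⟨Cl em r, ⟨fun _ _ h => Cl.ax h, fun _ _ _ h h' => Cl.mono h h',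
    fun _ _ _ h hs => Cl.cut h hs, fun σ _ _ h => Cl.subst σ h⟩,
    Cl_kary em r κ hinf hκary, fun Γ φ => ⟨Cl.base, fun h => ?_⟩⟩
  have hg : ∀ x, Function.invFun em (em x) = x := fun x =>
    Function.leftInverse_invFun hem x
  set τ : Y → L.Term X := fun y => Term.var (Function.invFun em y) with hτ
  have key := Cl_back em r hlogic h τ
  have h1 : ∀ t : L.Term X, (Term.relabel em t).subst τ = t := by
    intro t
    rw [term_subst_relabel]
    have hc : τ ∘ em = Term.var := funext fun x => by simp [hτ, hg x]
    rw [hc, term_subst_var']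
  have himg : (fun t : L.Term Y => t.subst τ) '' (Term.relabel em '' Γ) = Γ := by
    rw [Set.image_image]
    calc (fun t : L.Term X => (Term.relabel em t).subst τ) '' Γ
        = id '' Γ := Set.image_congr fun t _ => h1 t
      _ = Γ := Set.image_id Γ
  rwa [himg, h1] at key
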